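/- Let G be a group and define, for f : G → Z(G) a homomorphism, the map f♭ : G → G by f♭(w) = w·f(w)⁻¹. Then f♭ is an endomorphism of G, and for two homomorphisms f, g : G → Z(G), the product f*g defined by (f*g)(w) = f(w)·g(w)·(f∘g)(w)⁻¹ is again a homomorphism G → Z(G), and (f*g)♭ = f♭ ∘ g♭. -/

import Mathlib

/-- `f♭(w) = w · f(w)⁻¹`. -/
def flatFun {G : Type*} [Group G] (f : G → Subgroup.center G) : G → G :=
  fun w => w * ((f w : G))⁻¹

/-- `(f*g)(w) = f(w) · g(w) · f(g(w))⁻¹`. -/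
def starFun {G : Type*} [Group G] (f g : G → Subgroup.center G) :
    G → Subgroup.center G :=
  fun w => f w * g w * (f ((g w : G)))⁻¹

lemma center_comm {G : Type*} [Group G] (z : Subgroup.center G) (x : G) :
    x * (z : G) = (z : G) * x :=
  (Subgroup.mem_center_iff.mp z.2 x)

lemma center_comm_inv {G : Type*} [Group G] (z : Subgroup.center G) (x : G) :
    x * (z : G)⁻¹ = (z : G)⁻¹ * x := by
  have := center_comm z⁻¹ x
  simpa using this

/-- For homomorphisms `f, g : G → Z(G)`, the map `f♭` is an
endomorphism of `G`, the product `f*g` is again a homomorphism `G → Z(G)`, and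
`(f*g)♭ = f♭ ∘ g♭`. -/
theorem stmt_1 {G : Type*} [Group G] (f g : G →* Subgroup.center G) :
    (∃ F : G →* G, ⇑F = flatFun ⇑f) ∧
    (∃ P : G →* Subgroup.center G, ⇑P = starFun ⇑f ⇑g) ∧
    flatFun (starFun ⇑f ⇑g) = flatFun ⇑f ∘ flatFun ⇑g := by
  have key : ∀ (z : Subgroup.center G) (x y : G),
      x * (z : G)⁻¹ * y = x * y * (z : G)⁻¹ := by
    intro z x y
    rw [mul_assoc, ← center_comm_inv z y, ← mul_assoc]
  refine ⟨⟨{ toFun := flatFun ⇑f, map_one' := ?_, map_mul' := ?_ }, rfl⟩,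
    ⟨{ toFun := starFun ⇑f ⇑g, map_one' := ?_, map_mul' := ?_ }, rfl⟩, ?_⟩
  · simp [flatFun]
  · intro x y
    simp only [flatFun, map_mul, Subgroup.coe_mul, mul_inv_rev, ← mul_assoc]
    rw [key (f x) x y, mul_assoc (x * y), center_comm_inv (f x), ← mul_assoc]
  · simp [starFun]
  · intro x y
    simp only [starFun, map_mul, Subgroup.coe_mul, mul_inv_rev]
    simp [mul_comm, mul_assoc, mul_left_comm]
    ac_rfl
  · funext w
    simp only [Function.comp_apply, flatFun, starFun, map_mul, Subgroup.coe_mul,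
      mul_inv_rev, map_inv, Subgroup.coe_inv, inv_inv]
    rw [key (g w) w, center_comm_inv (f w) ((g w : G))⁻¹]
    group
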